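/- arXiv:2411.09509 — 2 statements merged into one kernel-verified Lean document; each statement's English description precedes it below -/
import Mathlib

section
/- Let γ ≠ 0 and let ρ_K, p_K, u_{nK}, u_{tK} (K ∈ {L,R}) be real numbers with ρ̄ ≠ 0, p̄ ≠ 0, and set ā² := γ p̄ / ρ̄ and q_K² := u_{nK}² + u_{tK}². Then the 4-vector (Δρ − Δp/ā², Δ(ρu_n) − Δ(pu_n)/ā², Δ(ρu_t) − Δ(pu_t)/ā², Δ(ρq²)/2 − Δ(pq²)/(2ā²)) equals (Δρ − Δp/ā²)·(1, ū_n, ū_t, q̄²/2) + ((γ−1)/γ) ρ̄ Δu_t·(0, 0, 1, ū_t) + ((γ−1)/γ) ρ̄ Δu_n·(0, 1, 0, ū_n), where q̄² = (q_L²+q_R²)/2 is the arithmetic average of q². In particular, the anti-diffusion term of the HLL-CPS scheme decomposes into a contact-wave part with coefficient δ₂ = 1, a shear-wave part with coefficient δ₃ = (γ−1)/γ, and a face-normal velocity-jump part with coefficient δₙ = (γ−1)/γ. -/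
set_option maxHeartbeats 1000000 in
/-- The anti-diffusion term of the HLL-CPS scheme decomposes into a contact-wave
part (coefficient `δ₂ = 1`), a shear-wave part (coefficient `δ₃ = (γ−1)/γ`) and a
face-normal velocity-jump part (coefficient `δₙ = (γ−1)/γ`). -/
theorem hllcps_antidiffusion_decomposition
    (γ ρL ρR pL pR unL unR utL utR : ℝ) (hγ : γ ≠ 0)
    (hρ : (ρL + ρR) / 2 ≠ 0) (hp : (pL + pR) / 2 ≠ 0)
    (a2 qL2 qR2 : ℝ)
    (ha2 : a2 = γ * ((pL + pR) / 2) / ((ρL + ρR) / 2))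
    (hqL : qL2 = unL ^ 2 + utL ^ 2) (hqR : qR2 = unR ^ 2 + utR ^ 2) :
    (![(ρR - ρL) - (pR - pL) / a2,
       (ρR * unR - ρL * unL) - (pR * unR - pL * unL) / a2,
       (ρR * utR - ρL * utL) - (pR * utR - pL * utL) / a2,
       (ρR * qR2 - ρL * qL2) / 2 - (pR * qR2 - pL * qL2) / (2 * a2)] : Fin 4 → ℝ)
    = ((ρR - ρL) - (pR - pL) / a2) •
        ![1, (unL + unR) / 2, (utL + utR) / 2, ((qL2 + qR2) / 2) / 2]
      + (((γ - 1) / γ) * ((ρL + ρR) / 2) * (utR - utL)) •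
        ![0, 0, 1, (utL + utR) / 2]
      + (((γ - 1) / γ) * ((ρL + ρR) / 2) * (unR - unL)) •
        ![0, 1, 0, (unL + unR) / 2] := by
  have hps : pL + pR ≠ 0 := fun h => hp (by rw [h]; ring)
  have hrs : ρL + ρR ≠ 0 := fun h => hρ (by rw [h]; ring)
  subst ha2 hqL hqR
  funext i
  fin_cases i <;>
    simp only [Matrix.cons_val_zero, Matrix.cons_val_one, Matrix.head_cons,
      Matrix.cons_val_two, Matrix.tail_cons, Matrix.cons_val_three,
      Matrix.cons_val_fin_one, Fin.zero_eta, Fin.mk_one, Fin.reduceFinMk, Matrix.cons_val, Pi.add_apply, Pi.smul_apply, smul_eq_mul] <;>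
    field_simp <;> ring
end

section
/- Let γ > 1 and let left/right states have u_{nL} = u_{nR} = 0, u_{tL} = u_{tR} = u_t, p_L = p_R = p > 0, and arbitrary densities ρ_L, ρ_R > 0. Let S_L < 0 < S_R be the wave speeds, ā² = γ p̄ / ρ̄ with arithmetic averages p̄ = p and ρ̄ = (ρ_L+ρ_R)/2. Then the HLL-CPS interface flux equals (0, p, 0, 0), which is the exact Euler flux of the stationary contact discontinuity; i.e., the HLL-CPS scheme resolves a stationary contact discontinuity exactly. -/
/-- The HLL-CPS flux (Zha–Bilgen splitting) at an interface, for states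
`(ρ, p, u_n, u_t)` on each side, wave speeds `S_L, S_R`, and interface sound
speed `ā² = γ p̄ / ρ̄` built from arithmetic averages. -/
noncomputable def hllcpsFlux (γ SL SR ρL ρR pL pR unL unR utL utR : ℝ) :
    Fin 4 → ℝ :=
  let unbar := (unL + unR) / 2
  let a2 := γ * ((pL + pR) / 2) / ((ρL + ρR) / 2)
  let qL2 := unL ^ 2 + utL ^ 2
  let qR2 := unR ^ 2 + utR ^ 2
  let rEL := pL / (γ - 1) + ρL * qL2 / 2
  let rER := pR / (γ - 1) + ρR * qR2 / 2
  let conv : Fin 4 → ℝ :=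
    if 0 ≤ unbar then
      (unbar / (unbar - SL) * (unL - SL)) • ![ρL, ρL * unL, ρL * utL, rEL]
    else
      (unbar / (unbar - SR) * (unR - SR)) • ![ρR, ρR * unR, ρR * utR, rER]
  let F2L : Fin 4 → ℝ := ![0, pL, 0, pL * unL]
  let F2R : Fin 4 → ℝ := ![0, pR, 0, pR * unR]
  conv + (SR - SL)⁻¹ • (SR • F2L - SL • F2R)
    + (SR * SL / (SR - SL)) •
        ![(pR - pL) / a2, (pR * unR - pL * unL) / a2, (pR * utR - pL * utL) / a2,
          (pR - pL) / (γ - 1) + (pR * qR2 - pL * qL2) / (2 * a2)]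

/-- The HLL-CPS scheme resolves a stationary contact discontinuity exactly:
for `u_{nL} = u_{nR} = 0`, equal tangential velocities and equal pressures,
the interface flux is the exact Euler flux `(0, p, 0, 0)`. -/
theorem hllcps_resolves_stationary_contact
    (γ p ut ρL ρR SL SR : ℝ) (hγ : 1 < γ) (hp : 0 < p)
    (hρL : 0 < ρL) (hρR : 0 < ρR) (hSL : SL < 0) (hSR : 0 < SR) :
    hllcpsFlux γ SL SR ρL ρR p p 0 0 ut ut = ![0, p, 0, 0] := by
  have hS : SR - SL ≠ 0 := by linarith
  funext i
  fin_cases i <;>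
    simp [hllcpsFlux, Matrix.cons_val_zero, Matrix.cons_val_one] <;>
    field_simp <;> ring
end
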